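/- Let A be a cyclic Leibniz algebra over ℂ of dimension n with generator a. For x ∈ A define the Engel subalgebra E_A(x) = {t ∈ A : L_xᵏ(t) = 0 for some k ∈ ℕ}. If x = c₁a + c₂a² + … + cₙaⁿ with c₁ ≠ 0 then E_A(x) = E_A(a), and if c₁ = 0 then E_A(x) = A. In particular E_A(a) is the unique minimal Engel subalgebra of A. -/

import Mathlib

/-- `lpow μ x k` is the left-normed power `x^(k+1)`; so `lpow μ x 0 = x`,
`lpow μ x 1 = x·x = x²`, `lpow μ x 2 = x·x² = x³`, etc. -/
def lpow {A : Type*} [AddCommGroup A] [Module ℂ A]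
    (μ : A →ₗ[ℂ] A →ₗ[ℂ] A) (x : A) : ℕ → A
  | 0 => x
  | n + 1 => μ x (lpow μ x n)
/-- The Engel subalgebra E_A(x) = {t ∈ A : L_xᵏ(t) = 0 for some k}. -/
def engel {A : Type*} [AddCommGroup A] [Module ℂ A]
    (μ : A →ₗ[ℂ] A →ₗ[ℂ] A) (x : A) : Set A :=
  {t : A | ∃ k : ℕ, (μ x ^ k) t = 0}

/-- In a cyclic Leibniz algebra with generator a: if x = c₁a + … + cₙaⁿ
with c₁ ≠ 0 then E_A(x) = E_A(a); if c₁ = 0 then E_A(x) = A. In particular E_A(a) is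
the unique minimal Engel subalgebra of A. -/
theorem cyclic_engel_subalgebras
    {A : Type*} [AddCommGroup A] [Module ℂ A]
    (μ : A →ₗ[ℂ] A →ₗ[ℂ] A)
    (hLeib : ∀ x y z : A, μ x (μ y z) = μ (μ x y) z + μ y (μ x z))
    (n : ℕ) (hn : 0 < n) (a : A)
    (b : Module.Basis (Fin n) ℂ A) (hb : ∀ i : Fin n, b i = lpow μ a (i : ℕ)) :
    (∀ c : Fin n → ℂ, c ⟨0, hn⟩ ≠ 0 →
        engel μ (∑ i : Fin n, c i • lpow μ a (i : ℕ)) = engel μ a) ∧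
    (∀ c : Fin n → ℂ, c ⟨0, hn⟩ = 0 →
        engel μ (∑ i : Fin n, c i • lpow μ a (i : ℕ)) = Set.univ) ∧
    (∀ y : A, engel μ y ⊆ engel μ a → engel μ y = engel μ a) ∧
    (∀ x : A, (∀ y : A, engel μ y ⊆ engel μ x → engel μ y = engel μ x) →
        engel μ x = engel μ a) := by
  -- left multiplication by any power a^{k+2} (i.e. lpow index ≥ 1) is zero
  have hzero : ∀ k : ℕ, μ (lpow μ a (k + 1)) = 0 := by
    intro k
    induction k with
    | zero =>
      ext z
      have h := (hLeib a a z).symm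
      rw [add_eq_right] at h
      simpa [lpow] using h
    | succ k ih =>
      ext z
      have h := hLeib a (lpow μ a (k + 1)) z
      simp only [ih, LinearMap.zero_apply, map_zero, add_zero] at h
      simpa [lpow] using h.symm
  -- hence L_x = c₁ • L_a
  have hmul : ∀ c : Fin n → ℂ,
      μ (∑ i : Fin n, c i • lpow μ a (i : ℕ)) = c ⟨0, hn⟩ • μ a := by
    intro c
    rw [map_sum, Finset.sum_eq_single (⟨0, hn⟩ : Fin n)]
    · simp [lpow]
    · intro i _ hi
      have hi' : (i : ℕ) ≠ 0 := fun h => hi (Fin.ext h)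
      obtain ⟨k, hk⟩ := Nat.exists_eq_succ_of_ne_zero hi'
      rw [map_smul, hk, hzero k, smul_zero]
    · simp
  have hE : ∀ c : Fin n → ℂ, c ⟨0, hn⟩ ≠ 0 →
      engel μ (∑ i : Fin n, c i • lpow μ a (i : ℕ)) = engel μ a := by
    intro c hc
    ext t
    simp only [engel, Set.mem_setOf_eq]
    constructor
    · rintro ⟨k, hk⟩
      refine ⟨k, ?_⟩
      rw [hmul c, smul_pow, LinearMap.smul_apply, smul_eq_zero] at hk
      rcases hk with hk | hk
      · exact absurd hk (pow_ne_zero k hc)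
      · exact hk
    · rintro ⟨k, hk⟩
      exact ⟨k, by rw [hmul c, smul_pow, LinearMap.smul_apply, hk, smul_zero]⟩
  have hU : ∀ c : Fin n → ℂ, c ⟨0, hn⟩ = 0 →
      engel μ (∑ i : Fin n, c i • lpow μ a (i : ℕ)) = Set.univ := by
    intro c hc
    ext t
    simp only [engel, Set.mem_setOf_eq, Set.mem_univ, iff_true]
    exact ⟨1, by rw [pow_one, hmul c, hc, zero_smul, LinearMap.zero_apply]⟩
  have hrepr : ∀ x : A, x = ∑ i : Fin n, (b.repr x) i • lpow μ a (i : ℕ) := by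
    intro x
    conv_lhs => rw [← b.sum_repr x]
    exact Finset.sum_congr rfl fun i _ => by rw [hb i]
  have hcases : ∀ y : A, engel μ y = engel μ a ∨ engel μ y = Set.univ := by
    intro y
    by_cases hc : (b.repr y) ⟨0, hn⟩ = 0
    · right; rw [hrepr y]; exact hU _ hc
    · left; rw [hrepr y]; exact hE _ hc
  refine ⟨hE, hU, ?_, ?_⟩
  · intro y hsub
    rcases hcases y with h | h
    · exact h
    · rw [h]
      rw [h] at hsub
      exact (Set.univ_subset_iff.mp hsub).symm
  · intro x hmin
    rcases hcases x with h | h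
    · exact h
    · have : engel μ a ⊆ engel μ x := by rw [h]; exact Set.subset_univ _
      exact (hmin a this).symm
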